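/- arXiv:1801.03879 — 3 statements merged into one kernel-verified Lean document; each statement's English description precedes it below -/
import Mathlib

section
/- Define T(i,j) as: T(1,j)=K_1 and T(i,j) is j+1 disjoint copies of T(i-1,j) plus a universal vertex. Then for all i > 0, j ≥ 0, T(i,j) does not admit an (i-1,j)-coloring, i.e., there is no partition of its vertices into i-1 classes each inducing a subgraph of maximum degree at most j. -/
/-- A `(C, D)`-coloring of `G`: a partition of the vertices into `C` classes such that every
vertex has at most `D` neighbors in its own class. -/
def HasDefectiveColoring {V : Type} (G : SimpleGraph V) (C D : ℕ) : Prop :=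
  ∃ f : V → Fin C, ∀ v : V, {u | G.Adj v u ∧ f u = f v}.ncard ≤ D

/-- Vertex type of the graph `T(n+1, j)` of the paper. -/
def TV : ℕ → ℕ → Type
  | 0, _ => Unit
  | n + 1, j => Option (Fin (j + 1) × TV n j)

/-- The graph `T(n+1, j)`: `Tgraph 0 j = K₁`; `Tgraph (n+1) j` is `j+1` disjoint copies of
`Tgraph n j` together with a universal vertex. -/
def Tgraph : (n : ℕ) → (j : ℕ) → SimpleGraph (TV n j)
  | 0, _ => ⊥
  | n + 1, j => SimpleGraph.fromRel (fun a b =>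
      match a, b with
      | none, _ => True
      | some _, none => False
      | some p, some q => p.1 = q.1 ∧ (Tgraph n j).Adj p.2 q.2)

instance instFintypeTV : (n j : ℕ) → Fintype (TV n j)
  | 0, _ => inferInstanceAs (Fintype Unit)
  | n + 1, j => letI := instFintypeTV n j
      inferInstanceAs (Fintype (Option (Fin (j + 1) × TV n j)))

/-- A point in every `TV n j`. -/
def tv0 : (n j : ℕ) → TV n j
  | 0, _ => ()
  | _ + 1, _ => none

lemma Tgraph_succ (n j : ℕ) : Tgraph (n + 1) j = SimpleGraph.fromRel (fun a b =>
    match a, b with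
    | none, _ => True
    | some _, none => False
    | some p, some q => p.1 = q.1 ∧ (Tgraph n j).Adj p.2 q.2) := rfl

lemma adj_none (n j : ℕ) (x : Fin (j + 1) × TV n j) :
    (Tgraph (n + 1) j).Adj (none : TV (n + 1) j) (some x) := by
  rw [Tgraph_succ]; refine (SimpleGraph.fromRel_adj ..).2 ?_
  exact ⟨fun h => Option.some_ne_none x (h : (none : Option (Fin (j + 1) × TV n j)) = some x).symm, Or.inl trivial⟩

lemma adj_some {n j : ℕ} (p q : Fin (j + 1) × TV n j) :
    (Tgraph (n + 1) j).Adj (some p : TV (n + 1) j) (some q) ↔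
      p.1 = q.1 ∧ (Tgraph n j).Adj p.2 q.2 := by
  rw [Tgraph_succ]; refine (SimpleGraph.fromRel_adj ..).trans ?_
  constructor
  · rintro ⟨hne, h | ⟨h1, h2⟩⟩
    · exact h
    · exact ⟨h1.symm, h2.symm⟩
  · rintro ⟨h1, h2⟩
    refine ⟨?_, Or.inl ⟨h1, h2⟩⟩
    intro h
    exact (Tgraph n j).loopless.irrefl _ (by cases (Option.some_injective _ h); exact h2)

/-- `T(i, j)` admits no `(i-1, j)`-coloring (here `i = n + 1`). -/
theorem Tgraph_not_defectiveColorable (n j : ℕ) :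
    ¬ HasDefectiveColoring (Tgraph n j) n j := by
  induction n with
  | zero =>
    rintro ⟨f, -⟩
    exact (f (tv0 0 j)).elim0
  | succ n ih =>
    rintro ⟨f, hf⟩
    set c := f none with hc
    -- some copy avoids color c
    have hcopy : ∃ k : Fin (j + 1), ∀ t : TV n j, f (some (k, t)) ≠ c := by
      by_contra h
      push_neg at h
      choose t ht using h
      set g : Fin (j + 1) → TV (n + 1) j := fun k => some (k, t k) with hg
      have hinj : Function.Injective g := by
        intro a b hab
        simpa [hg] using congrArg (fun o => o.elim a Prod.fst) hab
      have hsub : Set.range g ⊆ {u | (Tgraph (n + 1) j).Adj none u ∧ f u = f none} := by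
        rintro _ ⟨k, rfl⟩
        exact ⟨adj_none n j _, ht k⟩
      have h1 : (j + 1 : ℕ) ≤
          {u | (Tgraph (n + 1) j).Adj none u ∧ f u = f none}.ncard := by
        have : (Set.range g).ncard = j + 1 := by
          rw [← Set.image_univ, Set.ncard_image_of_injective _ hinj, Set.ncard_univ]
          simp
        have h2 := Set.ncard_le_ncard hsub (Set.toFinite _)
        omega
      have := hf none
      omega
    obtain ⟨k, hk⟩ := hcopy
    -- build an (n, j)-coloring of Tgraph n j
    apply ih
    set e := finSuccAboveEquiv c
    refine ⟨fun t => e.symm ⟨f (some (k, t)), hk t⟩, fun v => ?_⟩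
    have := hf (some (k, v))
    set g2 : TV n j → TV (n + 1) j := fun u => some (k, u) with hg2
    have hinj2 : Function.Injective g2 := by
      intro a b hab
      exact (Prod.ext_iff.1 (Option.some_injective _ hab)).2
    have hsub : g2 '' {u | (Tgraph n j).Adj v u ∧
        e.symm ⟨f (some (k, u)), hk u⟩ = e.symm ⟨f (some (k, v)), hk v⟩} ⊆
        {u | (Tgraph (n + 1) j).Adj (some (k, v)) u ∧ f u = f (some (k, v))} := by
      rintro _ ⟨u, ⟨hadj, heq⟩, rfl⟩
      refine ⟨(adj_some (k, v) (k, u)).2 ⟨rfl, hadj⟩, ?_⟩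
      exact congrArg Subtype.val (e.symm.injective heq)
    calc {u | (Tgraph n j).Adj v u ∧
            e.symm ⟨f (some (k, u)), hk u⟩ = e.symm ⟨f (some (k, v)), hk v⟩}.ncard
        = (g2 '' _).ncard := (Set.ncard_image_of_injective _ hinj2).symm
      _ ≤ {u | (Tgraph (n + 1) j).Adj (some (k, v)) u ∧ f u = f (some (k, v))}.ncard :=
          Set.ncard_le_ncard hsub (Set.toFinite _)
      _ ≤ j := hf (some (k, v))
end

section
/- Define T(i,j) as: T(1,j)=K_1 and T(i,j) is j+1 disjoint copies of T(i-1,j) plus a universal vertex. Then the tree-depth of T(i,j) equals i. -/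
/-- The tree-depth of a graph `G`: the minimum height of a rooted forest whose closure
contains `G` as a subgraph. -/
noncomputable def treeDepth {V : Type} (G : SimpleGraph V) : ℕ :=
  sInf {h : ℕ | ∃ lt : V → V → Prop, IsStrictOrder V lt ∧
    (∀ v : V, IsChain lt {u | lt u v}) ∧
    (∀ u v : V, G.Adj u v → lt u v ∨ lt v u) ∧
    (∀ s : Finset V, IsChain lt (↑s : Set V) → s.card ≤ h)}

def Tlt : (n j : ℕ) → TV n j → TV n j → Prop
  | 0, _, _, _ => False
  | n + 1, j, a, b =>
    match a, b with
    | none, some _ => True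
    | some p, some q => p.1 = q.1 ∧ Tlt n j p.2 q.2
    | _, none => False

def Trank : (n j : ℕ) → TV n j → ℕ
  | 0, _, _ => 0
  | _ + 1, _, none => 0
  | n + 1, j, some p => Trank n j p.2 + 1

theorem Tlt_irrefl : ∀ (n j : ℕ) (a : TV n j), ¬ Tlt n j a a
  | 0, _, _, h => h
  | n + 1, j, none, h => h
  | n + 1, j, some p, h => Tlt_irrefl n j p.2 h.2

theorem not_Tlt_none (n j : ℕ) : ∀ a : TV (n + 1) j, ¬ Tlt (n + 1) j a none
  | none, h => h
  | some _, h => h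

theorem Tlt_trans : ∀ (n j : ℕ) (a b c : TV n j),
    Tlt n j a b → Tlt n j b c → Tlt n j a c
  | 0, _, _, _, _, h, _ => h.elim
  | n + 1, j, none, some _, some _, _, _ => trivial
  | n + 1, j, some p, some q, some r, h1, h2 =>
      ⟨h1.1.trans h2.1, Tlt_trans n j p.2 q.2 r.2 h1.2 h2.2⟩
  | n + 1, j, _, b, none, _, h => (not_Tlt_none n j b h).elim
  | n + 1, j, a, none, some _, h, _ => (not_Tlt_none n j a h).elim

theorem Trank_lt : ∀ (n j : ℕ) (a : TV n j), Trank n j a < n + 1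
  | 0, _, _ => Nat.lt_succ_self 0
  | _ + 1, _, none => Nat.succ_pos _
  | n + 1, j, some p => Nat.succ_lt_succ (Trank_lt n j p.2)

theorem Tlt_rank : ∀ (n j : ℕ) (a b : TV n j), Tlt n j a b →
    Trank n j a < Trank n j b
  | 0, _, _, _, h => h.elim
  | n + 1, j, none, some _, _ => Nat.succ_pos _
  | n + 1, j, some p, some q, h => Nat.succ_lt_succ (Tlt_rank n j p.2 q.2 h.2)
  | n + 1, j, a, none, h => ((not_Tlt_none n j a h).elim : _)


theorem Tlt_downChain : ∀ (n j : ℕ) (v : TV n j), IsChain (Tlt n j) {u | Tlt n j u v}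
  | 0, _, _ => fun _ h => h.elim
  | n + 1, j, none => fun a ha => (not_Tlt_none n j a ha).elim
  | n + 1, j, some r => by
      rintro a ha b hb hab
      match a, b with
      | none, none => exact (hab rfl).elim
      | none, some q => exact Or.inl trivial
      | some p, none => exact Or.inr trivial
      | some p, some q =>
        have ha' : p.1 = r.1 ∧ Tlt n j p.2 r.2 := ha
        have hb' : q.1 = r.1 ∧ Tlt n j q.2 r.2 := hb
        have hne : p.2 ≠ q.2 := by
          intro h
          exact hab (congrArg some (Prod.ext (ha'.1.trans hb'.1.symm) h))
        have := Tlt_downChain n j r.2 ha'.2 hb'.2 hne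
        rcases this with h | h
        · exact Or.inl ⟨ha'.1.trans hb'.1.symm, h⟩
        · exact Or.inr ⟨hb'.1.trans ha'.1.symm, h⟩

theorem Tadj_comp : ∀ (n j : ℕ) (a b : TV n j), (Tgraph n j).Adj a b →
    Tlt n j a b ∨ Tlt n j b a
  | 0, _, _, _, h => h.elim
  | n + 1, j, a, b, h => by
      rw [show Tgraph (n+1) j = SimpleGraph.fromRel _ from rfl, SimpleGraph.fromRel_adj] at h
      obtain ⟨hne, h⟩ := h
      match a, b with
      | none, none => exact (hne rfl).elim
      | none, some q => exact Or.inl trivial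
      | some p, none => exact Or.inr trivial
      | some p, some q =>
        have h' : p.1 = q.1 ∧ (Tgraph n j).Adj p.2 q.2 := by
          rcases h with h | h
          · exact h
          · exact ⟨h.1.symm, h.2.symm⟩
        rcases Tadj_comp n j p.2 q.2 h'.2 with hl | hl
        · exact Or.inl ⟨h'.1, hl⟩
        · exact Or.inr ⟨h'.1.symm, hl⟩

def Tc : (n j : ℕ) → Fin (n + 1) → TV n j
  | 0, _, _ => ()
  | n + 1, j, k => Fin.cases none (fun i => some (0, Tc n j i)) k

theorem Tc_adj : ∀ (n j : ℕ) (a b : Fin (n + 1)), a ≠ b →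
    (Tgraph n j).Adj (Tc n j a) (Tc n j b)
  | 0, _, a, b, h => (h (Fin.fin_one_eq_zero a ▸ Fin.fin_one_eq_zero b ▸ rfl)).elim
  | n + 1, j, a, b, h => by
      rw [show Tgraph (n+1) j = SimpleGraph.fromRel _ from rfl, SimpleGraph.fromRel_adj]
      induction a using Fin.cases with
      | zero =>
        induction b using Fin.cases with
        | zero => exact (h rfl).elim
        | succ i => exact ⟨fun hh => Option.some_ne_none (0, Tc n j i) hh.symm, Or.inl trivial⟩
      | succ i =>
        induction b using Fin.cases with
        | zero => exact ⟨fun hh => Option.some_ne_none (0, Tc n j i) hh, Or.inr trivial⟩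
        | succ i' =>
          have hne : i ≠ i' := fun hh => h (by rw [hh])
          have hadj := Tc_adj n j i i' hne
          refine ⟨?_, Or.inl ⟨rfl, hadj⟩⟩
          simp only [Tc, Fin.cases_succ, ne_eq, Option.some.injEq, Prod.mk.injEq]
          intro hh
          exact hadj.ne (congrArg Prod.snd (Option.some.inj hh))

theorem Tc_inj (n j : ℕ) : Function.Injective (Tc n j) := by
  intro a b h
  by_contra hne
  exact (Tc_adj n j a b hne).ne h

/-- The tree-depth of `T(i, j)` equals `i` (here `i = n + 1`). -/
theorem treeDepth_Tgraph (n j : ℕ) : treeDepth (Tgraph n j) = n + 1 := by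
  classical
  haveI h1 : IsIrrefl (TV n j) (Tlt n j) := ⟨Tlt_irrefl n j⟩
  haveI h2 : IsTrans (TV n j) (Tlt n j) := ⟨Tlt_trans n j⟩
  have hmem : (n + 1) ∈ {h : ℕ | ∃ lt : TV n j → TV n j → Prop, IsStrictOrder (TV n j) lt ∧
      (∀ v, IsChain lt {u | lt u v}) ∧
      (∀ u v, (Tgraph n j).Adj u v → lt u v ∨ lt v u) ∧
      (∀ s : Finset (TV n j), IsChain lt (↑s : Set (TV n j)) → s.card ≤ n + 1)} := by
    refine ⟨Tlt n j, ⟨⟩, Tlt_downChain n j, Tadj_comp n j,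
      fun s hs => ?_⟩
    have hinj : Set.InjOn (Trank n j) ↑s := by
      intro a ha b hb hab
      by_contra hne
      rcases hs ha hb hne with h | h
      · exact (Tlt_rank n j a b h).ne hab
      · exact (Tlt_rank n j b a h).ne hab.symm
    calc s.card = (s.image (Trank n j)).card := (Finset.card_image_of_injOn hinj).symm
      _ ≤ (Finset.range (n + 1)).card := by
          apply Finset.card_le_card
          intro x hx
          obtain ⟨a, _, rfl⟩ := Finset.mem_image.mp hx
          exact Finset.mem_range.mpr (Trank_lt n j a)
      _ = n + 1 := Finset.card_range _
  refine le_antisymm (Nat.sInf_le hmem) (le_csInf ⟨_, hmem⟩ ?_)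
  rintro h ⟨lt, _, _, hadj, hcard⟩
  have hchain : IsChain lt (↑(Finset.image (Tc n j) Finset.univ) : Set (TV n j)) := by
    intro a ha b hb hne
    obtain ⟨a', -, rfl⟩ := Finset.mem_image.mp ha
    obtain ⟨b', -, rfl⟩ := Finset.mem_image.mp hb
    have : a' ≠ b' := fun hh => hne (by rw [hh])
    exact hadj _ _ (Tc_adj n j a' b' this)
  have := hcard _ hchain
  rwa [Finset.card_image_of_injective _ (Tc_inj n j), Finset.card_univ, Fintype.card_fin] at this
end

section
/- Consider the equality gadget Q: take i·j+1 disjoint copies of T(i-1,j) together with two additional vertices u1, u2, where u1 and u2 are adjacent to every vertex of the copies but not to each other. Then in any (i,j)-coloring of Q, the vertices u1 and u2 receive the same color. -/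
/-- Vertex type of the equality gadget `Q(u₁, u₂, i, j)` with `i = m + 2`:
two endpoint vertices (`Sum.inl 0`, `Sum.inl 1`) plus `i·j + 1` disjoint copies of
`T(i-1, j) = Tgraph m j`. -/
def QV (m j : ℕ) : Type := (Fin 2) ⊕ (Fin ((m + 2) * j + 1) × TV m j)

/-- The equality gadget `Q(u₁, u₂, i, j)` with `i = m + 2`: `i·j + 1` disjoint copies of
`T(i-1, j)`, together with two vertices `u₁, u₂` adjacent to every vertex of the copies
but not to each other. -/
def Qgraph (m j : ℕ) : SimpleGraph (QV m j) :=
  SimpleGraph.fromRel (fun a b =>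
    match a, b with
    | Sum.inl _, Sum.inr _ => True
    | Sum.inr p, Sum.inr q => p.1 = q.1 ∧ (Tgraph m j).Adj p.2 q.2
    | _, _ => False)

instance TV.fintype : ∀ (n j : ℕ), Fintype (TV n j)
  | 0, _ => inferInstanceAs (Fintype Unit)
  | n+1, j => letI := TV.fintype n j; inferInstanceAs (Fintype (Option (Fin (j+1) × TV n j)))

instance (m j : ℕ) : Fintype (QV m j) := inferInstanceAs (Fintype (_ ⊕ _))

lemma Tgraph_adj_none {n j : ℕ} (p : Fin (j+1) × TV n j) :
    (Tgraph (n+1) j).Adj none (some p) := by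
  show (SimpleGraph.fromRel _).Adj _ _
  refine (SimpleGraph.fromRel_adj _ _ _).mpr ?_
  simp
  exact (Option.some_ne_none p).symm

lemma Tgraph_adj_some {n j : ℕ} (k : Fin (j+1)) {u v : TV n j}
    (h : (Tgraph n j).Adj u v) :
    (Tgraph (n+1) j).Adj (some (k,u)) (some (k,v)) := by
  show (SimpleGraph.fromRel _).Adj _ _
  refine (SimpleGraph.fromRel_adj _ _ _).mpr ?_
  exact ⟨fun e => h.ne (congrArg Prod.snd (Option.some.inj e)), Or.inl ⟨rfl, h⟩⟩

lemma Qgraph_adj_inl_inr {m j : ℕ} (a : Fin 2) (p : Fin ((m+2)*j+1) × TV m j) :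
    (Qgraph m j).Adj (Sum.inl a) (Sum.inr p) := by
  show (SimpleGraph.fromRel _).Adj _ _
  refine (SimpleGraph.fromRel_adj _ _ _).mpr ?_
  simp
  exact Sum.inl_ne_inr

lemma Qgraph_adj_inr {m j : ℕ} (k : Fin ((m+2)*j+1)) {u v : TV m j}
    (h : (Tgraph m j).Adj u v) :
    (Qgraph m j).Adj (Sum.inr (k,u)) (Sum.inr (k,v)) := by
  show (SimpleGraph.fromRel _).Adj _ _
  refine (SimpleGraph.fromRel_adj _ _ _).mpr ?_
  exact ⟨fun e => h.ne (congrArg Prod.snd (Sum.inr.inj e)), Or.inl ⟨rfl, h⟩⟩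

lemma T_image_card : ∀ (n j : ℕ) {α : Type} [DecidableEq α] (g : TV n j → α),
    (∀ v, {u | (Tgraph n j).Adj v u ∧ g u = g v}.ncard ≤ j) →
    n + 1 ≤ (Finset.univ.image g).card
  | 0, j, α, _, g, hg =>
    Finset.card_pos.mpr ⟨g (), Finset.mem_image_of_mem g (Finset.mem_univ ())⟩
  | n+1, j, α, _, g, hg => by
    -- restrictions to the copies
    set gk : Fin (j+1) → TV n j → α := fun k v => g (some (k, v)) with hgk
    have hdef : ∀ k v, {u | (Tgraph n j).Adj v u ∧ gk k u = gk k v}.ncard ≤ j := by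
      intro k v
      have hsub : (fun u => (some (k, u) : TV (n+1) j)) ''
          {u | (Tgraph n j).Adj v u ∧ gk k u = gk k v} ⊆
          {u | (Tgraph (n+1) j).Adj (some (k, v)) u ∧ g u = g (some (k, v))} := by
        rintro _ ⟨u, ⟨hadj, hcol⟩, rfl⟩
        exact ⟨Tgraph_adj_some k hadj, hcol⟩
      have hinj : Function.Injective (fun u : TV n j => (some (k, u) : TV (n+1) j)) :=
        fun a b e => congrArg Prod.snd (Option.some.inj e)
      calc {u | (Tgraph n j).Adj v u ∧ gk k u = gk k v}.ncard
          = ((fun u => (some (k, u) : TV (n+1) j)) ''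
              {u | (Tgraph n j).Adj v u ∧ gk k u = gk k v}).ncard :=
            (Set.ncard_image_of_injective _ hinj).symm
        _ ≤ {u | (Tgraph (n+1) j).Adj (some (k, v)) u ∧ g u = g (some (k, v))}.ncard :=
            Set.ncard_le_ncard hsub (Set.toFinite _)
        _ ≤ j := hg (some (k, v))
    have IH : ∀ k, n + 1 ≤ (Finset.univ.image (gk k)).card :=
      fun k => T_image_card n j (gk k) (hdef k)
    -- some copy avoids the color of the root
    have hmiss : ∃ k : Fin (j+1), ∀ v : TV n j, g (some (k, v)) ≠ g none := by
      by_contra hcon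
      push_neg at hcon
      choose w hw using hcon
      set F : Fin (j+1) → TV (n+1) j := fun k => some (k, w k) with hF
      have hinj : Function.Injective F := by
        intro a b e
        exact congrArg Prod.fst (Option.some.inj e)
      have hsub : Set.range F ⊆ {u | (Tgraph (n+1) j).Adj none u ∧ g u = g none} := by
        rintro _ ⟨k, rfl⟩
        exact ⟨Tgraph_adj_none _, hw k⟩
      have h1 : (Set.range F).ncard = j + 1 := by
        rw [← Set.image_univ, Set.ncard_image_of_injective _ hinj, Set.ncard_univ]
        simp
      have h2 : (Set.range F).ncard ≤ j :=
        le_trans (Set.ncard_le_ncard hsub (Set.toFinite _)) (hg none)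
      omega
    obtain ⟨k, hk⟩ := hmiss
    have hsub : insert (g none) (Finset.univ.image (gk k)) ⊆ Finset.univ.image g := by
      intro c hc
      rcases Finset.mem_insert.mp hc with rfl | hc
      · exact Finset.mem_image_of_mem g (Finset.mem_univ none)
      · obtain ⟨v, _, rfl⟩ := Finset.mem_image.mp hc
        exact Finset.mem_image_of_mem g (Finset.mem_univ (some (k, v)))
    have hnotmem : g none ∉ Finset.univ.image (gk k) := by
      intro hc
      obtain ⟨v, _, hv⟩ := Finset.mem_image.mp hc
      exact hk v hv
    have := Finset.card_le_card hsub
    rw [Finset.card_insert_of_notMem hnotmem] at this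
    have := IH k
    omega

instance TV.inhabited : ∀ (n j : ℕ), Inhabited (TV n j)
  | 0, _ => ⟨()⟩
  | _+1, _ => ⟨none⟩

/-- In any `(i, j)`-coloring of the equality gadget (here `i = m + 2`), the two endpoints
`u₁` and `u₂` receive the same color. -/
theorem equalityGadget_forces_equal (m j : ℕ) (f : QV m j → Fin (m + 2))
    (hf : ∀ v : QV m j, {u | (Qgraph m j).Adj v u ∧ f u = f v}.ncard ≤ j) :
    f (Sum.inl 0) = f (Sum.inl 1) := by
  classical
  set gk : Fin ((m+2)*j+1) → TV m j → Fin (m+2) := fun k v => f (Sum.inr (k, v)) with hgk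
  have hdef : ∀ k v, {u | (Tgraph m j).Adj v u ∧ gk k u = gk k v}.ncard ≤ j := by
    intro k v
    have hinj : Function.Injective (fun u : TV m j => (Sum.inr (k, u) : QV m j)) :=
      fun a b e => congrArg Prod.snd (Sum.inr.inj e)
    have hsub : (fun u : TV m j => (Sum.inr (k, u) : QV m j)) ''
        {u | (Tgraph m j).Adj v u ∧ gk k u = gk k v} ⊆
        {u | (Qgraph m j).Adj (Sum.inr (k, v)) u ∧ f u = f (Sum.inr (k, v))} := by
      rintro _ ⟨u, ⟨hadj, hcol⟩, rfl⟩
      exact ⟨Qgraph_adj_inr k hadj, hcol⟩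
    calc {u | (Tgraph m j).Adj v u ∧ gk k u = gk k v}.ncard
        = ((fun u : TV m j => (Sum.inr (k, u) : QV m j)) ''
            {u | (Tgraph m j).Adj v u ∧ gk k u = gk k v}).ncard :=
          (Set.ncard_image_of_injective _ hinj).symm
      _ ≤ _ := Set.ncard_le_ncard hsub (Set.toFinite _)
      _ ≤ j := hf (Sum.inr (k, v))
  have himg : ∀ k, m + 1 ≤ (Finset.univ.image (gk k)).card :=
    fun k => T_image_card m j (gk k) (hdef k)
  -- each copy misses at most one color
  set miss : Fin ((m+2)*j+1) → Fin (m+2) := fun k =>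
    if h : ((Finset.univ.image (gk k))ᶜ).Nonempty then h.choose else 0 with hmiss
  have hfull : ∀ k c, c ≠ miss k → ∃ v, gk k v = c := by
    intro k c hc
    by_contra hno
    push_neg at hno
    have hcmem : c ∈ (Finset.univ.image (gk k))ᶜ := by
      simp only [Finset.mem_compl, Finset.mem_image, not_exists]
      intro v
      simp only [Finset.mem_univ, true_and]
      exact hno v
    have hone : ((Finset.univ.image (gk k))ᶜ).card ≤ 1 := by
      have h1 := Finset.card_compl (Finset.univ.image (gk k))
      have h2 := himg k
      simp only [Fintype.card_fin] at h1
      omega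
    have hne' : ((Finset.univ.image (gk k))ᶜ).Nonempty := ⟨c, hcmem⟩
    have hmem : miss k ∈ (Finset.univ.image (gk k))ᶜ := by
      simp only [hmiss]
      rw [dif_pos hne']
      exact hne'.choose_spec
    exact hc (Finset.card_le_one.mp hone c hcmem (miss k) hmem)
  -- pigeonhole: some color is missed (or not used as miss value) by ≥ j+1 copies
  obtain ⟨x, -, hx⟩ := Finset.exists_lt_card_fiber_of_mul_lt_card_of_maps_to
    (f := miss) (s := Finset.univ) (t := Finset.univ) (n := j)
    (fun k _ => Finset.mem_univ (miss k))
    (by simp only [Finset.card_univ, Fintype.card_fin]; omega)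
  have key : ∀ a : Fin 2, f (Sum.inl a) = x := by
    intro a
    by_contra hne
    set S := Finset.univ.filter fun k => miss k = x with hS
    let w : Fin ((m+2)*j+1) → TV m j := fun k =>
      if h : ∃ v, gk k v = f (Sum.inl a) then h.choose else default
    have hw : ∀ k ∈ S, f (Sum.inr (k, w k)) = f (Sum.inl a) := by
      intro k hk
      have hkx : miss k = x := (Finset.mem_filter.mp hk).2
      have h : ∃ v, gk k v = f (Sum.inl a) := hfull k _ (by rw [hkx]; exact hne)
      show gk k (w k) = f (Sum.inl a)
      simp only [w, dif_pos h]
      exact h.choose_spec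
    let F : Fin ((m+2)*j+1) → QV m j := fun k => Sum.inr (k, w k)
    have hinj : Function.Injective F := fun a b e => congrArg Prod.fst (Sum.inr.inj e)
    have hsub : F '' ↑S ⊆ {u | (Qgraph m j).Adj (Sum.inl a) u ∧ f u = f (Sum.inl a)} := by
      rintro _ ⟨k, hk, rfl⟩
      exact ⟨Qgraph_adj_inl_inr a _, hw k hk⟩
    have h1 : (F '' ↑S).ncard = S.card := by
      rw [Set.ncard_image_of_injective _ hinj, Set.ncard_coe_finset]
    have h2 : (F '' ↑S).ncard ≤ j :=
      le_trans (Set.ncard_le_ncard hsub (Set.toFinite _)) (hf (Sum.inl a))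
    have hx' : j < S.card := hx
    omega
  rw [key 0, key 1]
end
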